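/- Let G = (S, E) be a finite directed graph in which every vertex i has out-degree d_i ≥ 1, and let P be the simple-random-walk matrix: P(i,j) = 1/d_i if (i,j) ∈ E and P(i,j) = 0 otherwise. Assume P is irreducible and let π be its unique stationary distribution. Then: (a) every arborescence a rooted at i all of whose edges lie in E (i.e., (j, a(j)) ∈ E for all j ≠ i) has weight |a|_P = ∏_{j≠i} 1/d_j; and (b) for every i ∈ S, π(i) = d_i · N_i / Σ_{j∈S} d_j · N_j, where N_i denotes the number of arborescences rooted at i all of whose edges lie in E. In particular, π(i) is proportional to the product of the out-degree of i and the number of arborescences of G rooted at i. -/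
import Mathlib


open Filter Topology

/-- A matrix is row-stochastic: nonnegative entries and each row sums to 1. -/
def RowStochastic {S : Type*} [Fintype S] (P : Matrix S S ℝ) : Prop :=
  (∀ i j, 0 ≤ P i j) ∧ ∀ i, ∑ j, P i j = 1

/-- A probability row vector `π` is a stationary distribution of `P`. -/
def StationaryDist {S : Type*} [Fintype S] (P : Matrix S S ℝ) (π : S → ℝ) : Prop :=
  (∀ i, 0 ≤ π i) ∧ (∑ i, π i = 1) ∧ ∀ j, ∑ i, π i * P i j = π j

/-- Irreducibility: any state leads to any other in some number `k ≥ 1` of steps. -/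
def MatIrreducible {S : Type*} [Fintype S] [DecidableEq S] (P : Matrix S S ℝ) : Prop :=
  ∀ i j, ∃ k, 1 ≤ k ∧ 0 < (P ^ k) i j

/-- An arborescence rooted at `root`, encoded as a map `f : S → S` fixing the root
(so that the partial map on `S \ {root}` is pinned down) such that iterates of `f`
from every state reach the root. -/
def IsArb {S : Type*} (root : S) (f : S → S) : Prop :=
  f root = root ∧ ∀ j, ∃ k, f^[k] j = root

/-- The weight of an arborescence with respect to a matrix `R`:
the product of the weights of its edges `(j, f j)`, `j ≠ root`. -/
def arbWeight {S : Type*} [Fintype S] [DecidableEq S]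
    (R : Matrix S S ℝ) (root : S) (f : S → S) : ℝ :=
  ∏ j ∈ Finset.univ.erase root, R j (f j)

section AuxLemmas

variable {S : Type*}

lemma reach_of_agree (f g : S → S) (r : S) (hfg : ∀ x, x ≠ r → f x = g x)
    (k : S) : (∃ m, f^[m] k = r) → ∃ m, g^[m] k = r := by
  rintro ⟨m, hm⟩
  induction m generalizing k with
  | zero => exact ⟨0, hm⟩
  | succ n ih =>
    by_cases hk : k = r
    · exact ⟨0, hk⟩
    · rw [Function.iterate_succ_apply] at hm
      obtain ⟨m', hm'⟩ := ih (f k) hm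
      exact ⟨m' + 1, by rw [Function.iterate_succ_apply, ← hfg k hk]; exact hm'⟩

lemma arb_update_eq_root [DecidableEq S] {i j v : S} {a : S → S}
    (ha : IsArb i a)
    (hv : Function.update a i j v = j)
    (hreach : ∃ m, (Function.update a i j)^[m] j = v) : v = i := by
  classical
  by_contra hvi
  set f := Function.update a i j with hfdef
  set m := Nat.find hreach with hmdef
  have hm : f^[m] j = v := Nat.find_spec hreach
  have hclaim1 : ∀ s ≤ m, f^[s] j ≠ i := by
    intro s hs hsi
    rcases eq_or_lt_of_le hs with h | h
    · rw [h] at hsi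
      exact hvi (hsi.symm.trans hm).symm
    · have h1 : f^[s + 1] j = j := by
        rw [Function.iterate_succ_apply', hsi, hfdef, Function.update_self]
      have h2 : f^[m - (s + 1)] j = v := by
        have heq : (m - (s + 1)) + (s + 1) = m := by omega
        have h3 := Function.iterate_add_apply f (m - (s + 1)) (s + 1) j
        rw [h1, heq, hm] at h3
        exact h3.symm
      exact Nat.find_min hreach (by omega : m - (s + 1) < m) h2
  have hclaim2 : ∀ s, s ≤ m → a^[s] j = f^[s] j := by
    intro s
    induction s with
    | zero => intro _; rfl
    | succ n ih =>
      intro hs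
      have hn : n ≤ m := by omega
      rw [Function.iterate_succ_apply', Function.iterate_succ_apply', ih hn]
      exact (Function.update_of_ne (hclaim1 n hn) j a).symm
  have hav : a v = j := (Function.update_of_ne hvi j a).symm.trans hv
  have hper : Function.IsPeriodicPt a (m + 1) j := by
    show a^[m + 1] j = j
    rw [Function.iterate_succ_apply', hclaim2 m le_rfl, hm, hav]
  have hclaim3 : ∀ t, a^[t] j ≠ i := by
    intro t
    have hmod : a^[t % (m + 1)] j = a^[t] j := hper.iterate_mod_apply t
    have hle : t % (m + 1) ≤ m := Nat.le_of_lt_succ (Nat.mod_lt _ (Nat.succ_pos m))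
    rw [← hmod, hclaim2 _ hle]
    exact hclaim1 _ hle
  obtain ⟨t, ht⟩ := ha.2 j
  exact hclaim3 t ht

lemma pow_entry_nonneg [Fintype S] [DecidableEq S] (P : Matrix S S ℝ)
    (h : ∀ i j, 0 ≤ P i j) : ∀ k i j, 0 ≤ (P ^ k) i j := by
  intro k
  induction k with
  | zero =>
    intro i j
    rw [pow_zero]
    by_cases hij : i = j <;> simp [Matrix.one_apply, hij]
  | succ n ih =>
    intro i j
    rw [pow_succ, Matrix.mul_apply]
    exact Finset.sum_nonneg fun l _ => mul_nonneg (ih i l) (h l j)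

lemma exists_arb [Fintype S] [DecidableEq S]
    (E : Finset (S × S)) (P : Matrix S S ℝ)
    (hPE : ∀ i j, 0 < P i j → (i, j) ∈ E)
    (hP0 : ∀ i j, 0 ≤ P i j)
    (hreach : ∀ v i : S, ∃ k, 0 < (P ^ k) v i) (i : S) :
    ∃ f : S → S, IsArb i f ∧ ∀ j, j ≠ i → (j, f j) ∈ E := by
  classical
  set R : S → ℕ := fun v => Nat.find (hreach v i) with hR
  have hstep : ∀ v, v ≠ i → ∃ w, (v, w) ∈ E ∧ R w < R v := by
    intro v hv
    have hRv : 0 < (P ^ (R v)) v i := Nat.find_spec (hreach v i)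
    have hpos : 1 ≤ R v := by
      rcases Nat.eq_zero_or_pos (R v) with h0 | h
      · exfalso
        rw [h0, pow_zero, Matrix.one_apply_ne hv] at hRv
        exact lt_irrefl 0 hRv
      · exact h
    obtain ⟨m, hm⟩ : ∃ m, R v = m + 1 := ⟨R v - 1, by omega⟩
    rw [hm, pow_succ', Matrix.mul_apply] at hRv
    obtain ⟨w, -, hw⟩ : ∃ w ∈ Finset.univ, 0 < P v w * (P ^ m) w i := by
      by_contra hc
      push_neg at hc
      have hle : ∑ w, P v w * (P ^ m) w i ≤ 0 := Finset.sum_nonpos fun w hw => hc w hw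
      linarith
    have h1 : 0 < P v w :=
      lt_of_le_of_ne (hP0 v w) (fun h => by rw [← h, zero_mul] at hw; exact lt_irrefl 0 hw)
    have h2 : 0 < (P ^ m) w i :=
      lt_of_le_of_ne (pow_entry_nonneg P hP0 m w i)
        (fun h => by rw [← h, mul_zero] at hw; exact lt_irrefl 0 hw)
    refine ⟨w, hPE _ _ h1, ?_⟩
    have hwle : R w ≤ m := Nat.find_le h2
    omega
  choose g hg1 hg2 using hstep
  refine ⟨fun v => if hv : v = i then i else g v hv, ⟨by simp, ?_⟩, ?_⟩
  · have key : ∀ n v, R v ≤ n → ∃ m, (fun v => if hv : v = i then i else g v hv)^[m] v = i := by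
      intro n
      induction n with
      | zero =>
        intro v hv
        by_cases h : v = i
        · exact ⟨0, h⟩
        · exact absurd (hg2 v h) (by omega)
      | succ n ih =>
        intro v hv
        by_cases h : v = i
        · exact ⟨0, h⟩
        · obtain ⟨m, hm⟩ := ih (g v h) (by have := hg2 v h; omega)
          refine ⟨m + 1, ?_⟩
          rw [Function.iterate_succ_apply]
          simpa [dif_neg h] using hm
    intro v; exact key (R v) v le_rfl
  · intro v hv
    simpa [dif_neg hv] using hg1 v hv

lemma stationary_pow [Fintype S] [DecidableEq S] (P : Matrix S S ℝ) (x : S → ℝ)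
    (hx : ∀ j, ∑ i, x i * P i j = x j) : ∀ (k : ℕ) (j : S), ∑ i, x i * (P ^ k) i j = x j := by
  intro k
  induction k with
  | zero => intro j; simp [pow_zero, Matrix.one_apply, mul_ite, Finset.sum_ite_eq']
  | succ n ih =>
    intro j
    rw [pow_succ]
    calc ∑ i, x i * (P ^ n * P) i j
        = ∑ i, ∑ l, x i * ((P ^ n) i l * P l j) := by
          simp only [Matrix.mul_apply, Finset.mul_sum]
      _ = ∑ l, (∑ i, x i * (P ^ n) i l) * P l j := by
          rw [Finset.sum_comm]
          refine Finset.sum_congr rfl fun l _ => ?_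
          rw [Finset.sum_mul]
          exact Finset.sum_congr rfl fun i _ => (mul_assoc _ _ _).symm
      _ = ∑ l, x l * P l j := Finset.sum_congr rfl fun l _ => by rw [ih l]
      _ = x j := hx j

lemma vanish_of_stationary [Fintype S] [DecidableEq S] (P : Matrix S S ℝ)
    (hP0 : ∀ i j, 0 ≤ P i j) (hirr : MatIrreducible P)
    (x : S → ℝ) (hx0 : ∀ i, 0 ≤ x i) (hxP : ∀ j, ∑ i, x i * P i j = x j)
    (i0 : S) (h0 : x i0 = 0) : ∀ v, x v = 0 := by
  intro v
  obtain ⟨k, -, hk⟩ := hirr v i0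
  have hsum : ∑ i, x i * (P ^ k) i i0 = 0 := by rw [stationary_pow P x hxP k i0, h0]
  have hterm := (Finset.sum_eq_zero_iff_of_nonneg
    (fun i _ => mul_nonneg (hx0 i) (pow_entry_nonneg P hP0 k i i0))).mp hsum v (Finset.mem_univ v)
  rcases mul_eq_zero.mp hterm with h | h
  · exact h
  · exact absurd h (ne_of_gt hk)

end AuxLemmas

open Classical in
/-- For the simple random walk on a directed graph `(S, E)` where every vertex has
out-degree `d i ≥ 1`: (a) every arborescence rooted at `i` with all edges in `E`
has weight `∏_{j≠i} 1/d j`; (b) the stationary distribution satisfies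
`π i = d i · N i / ∑ j, d j · N j` with `N i` the number of arborescences rooted
at `i` with all edges in `E`. -/
theorem pagerank_simple_random_walk_arborescence_count
    {S : Type*} [Fintype S] [DecidableEq S] [Nonempty S]
    (E : Finset (S × S))
    (d : S → ℕ) (hd : ∀ i, d i = (Finset.univ.filter (fun j => (i, j) ∈ E)).card)
    (hd1 : ∀ i, 1 ≤ d i)
    (P : Matrix S S ℝ)
    (hPdef : ∀ i j, P i j = if (i, j) ∈ E then (1 : ℝ) / d i else 0)
    (hirr : MatIrreducible P)
    (π : S → ℝ) (hπ : StationaryDist P π)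
    (N : S → ℕ)
    (hN : ∀ i, N i = (Finset.univ.filter
        (fun f : S → S => IsArb i f ∧ ∀ j ∈ Finset.univ.erase i, (j, f j) ∈ E)).card) :
    (∀ i : S, ∀ f : S → S, IsArb i f → (∀ j ∈ Finset.univ.erase i, (j, f j) ∈ E) →
        arbWeight P i f = ∏ j ∈ Finset.univ.erase i, (1 : ℝ) / d j) ∧
    ∀ i : S, π i = ((d i : ℝ) * N i) / ∑ j, (d j : ℝ) * N j := by
  classical
  have hdpos : ∀ i, (0 : ℝ) < d i := by
    intro i
    exact_mod_cast Nat.lt_of_lt_of_le Nat.zero_lt_one (hd1 i)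
  have hP0 : ∀ i j, 0 ≤ P i j := by
    intro i j
    rw [hPdef]
    split
    · positivity
    · exact le_refl 0
  have hPE : ∀ i j, 0 < P i j → (i, j) ∈ E := by
    intro i j h
    rw [hPdef] at h
    by_contra hc
    rw [if_neg hc] at h
    exact lt_irrefl 0 h
  -- membership in the arborescence finsets
  have hmemA : ∀ (r : S) (f : S → S),
      (f ∈ Finset.univ.filter
        (fun f : S → S => IsArb r f ∧ ∀ j ∈ Finset.univ.erase r, (j, f j) ∈ E)) ↔
      (IsArb r f ∧ ∀ j, j ≠ r → (j, f j) ∈ E) := by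
    intro r f
    simp only [Finset.mem_filter, Finset.mem_univ, true_and, Finset.mem_erase, ne_eq,
      and_imp, true_implies]
  -- Part (a)
  have parta : ∀ i : S, ∀ f : S → S, IsArb i f → (∀ j ∈ Finset.univ.erase i, (j, f j) ∈ E) →
      arbWeight P i f = ∏ j ∈ Finset.univ.erase i, (1 : ℝ) / d j := by
    intro i f _ hE
    unfold arbWeight
    exact Finset.prod_congr rfl fun j hj => by rw [hPdef, if_pos (hE j hj)]
  -- the key combinatorial identity
  have keyB : ∀ j : S,
      (∑ i ∈ Finset.univ.filter (fun i : S => (i, j) ∈ E), N i) = d j * N j := by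
    intro j
    set F : Finset (S → S) := Finset.univ.filter
      (fun f : S → S => (∀ k, (k, f k) ∈ E) ∧ ∀ k, ∃ m, f^[m] k = j) with hF
    have hmemF : ∀ f : S → S,
        f ∈ F ↔ ((∀ k, (k, f k) ∈ E) ∧ ∀ k, ∃ m, f^[m] k = j) := by
      intro f; simp [hF]
    -- Step 1: LHS = F.card via (i, a) ↦ update a i j
    have hB : (∑ i ∈ Finset.univ.filter (fun i : S => (i, j) ∈ E), N i) = F.card := by
      simp only [hN]
      rw [← Finset.card_sigma]
      refine Finset.card_bij (fun (p : Σ _ : S, S → S) _ => Function.update p.2 p.1 j)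
        ?_ ?_ ?_
      · -- maps into F
        rintro ⟨i, a⟩ hp
        rw [Finset.mem_sigma] at hp
        obtain ⟨hi, haA⟩ := hp
        rw [Finset.mem_filter] at hi
        obtain ⟨ha, haE⟩ := (hmemA i a).mp haA
        show Function.update a i j ∈ F
        rw [hmemF]
        constructor
        · intro v
          by_cases hv : v = i
          · subst hv; rw [Function.update_self]; exact hi.2
          · rw [Function.update_of_ne hv]; exact haE v hv
        · intro k
          obtain ⟨m, hm⟩ := reach_of_agree a (Function.update a i j) i
            (fun x hx => (Function.update_of_ne hx j a).symm) k (ha.2 k)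
          refine ⟨m + 1, ?_⟩
          rw [Function.iterate_succ_apply', hm, Function.update_self]
      · -- injective
        rintro ⟨i, a⟩ hp ⟨i', a'⟩ hp' heq
        have heq' : Function.update a i j = Function.update a' i' j := heq
        rw [Finset.mem_sigma] at hp hp'
        obtain ⟨ha, haE⟩ := (hmemA i a).mp hp.2
        obtain ⟨ha', _⟩ := (hmemA i' a').mp hp'.2
        have hii' : i = i' := by
          refine arb_update_eq_root (j := j) ha' ?_ ?_
          · rw [← heq', Function.update_self]
          · rw [← heq']
            exact reach_of_agree a (Function.update a i j) i
              (fun x hx => (Function.update_of_ne hx j a).symm) j (ha.2 j)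
        subst hii'
        have hback : ∀ (b : S → S), b i = i →
            Function.update (Function.update b i j) i i = b := by
          intro b hb
          rw [Function.update_idem]
          calc Function.update b i i = Function.update b i (b i) := by rw [hb]
            _ = b := Function.update_eq_self i b
        have haa' : a = a' := by
          rw [← hback a ha.1, ← hback a' ha'.1, heq']
        rw [haa']
      · -- surjective
        intro f hfF
        obtain ⟨hfE, hfreach⟩ := (hmemF f).mp hfF
        obtain ⟨m0, hm0⟩ := hfreach (f j)
        have hfi : f (f^[m0] j) = j := by
          have h1 := Function.iterate_succ_apply f m0 j
          have h2 := Function.iterate_succ_apply' f m0 j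
          exact h2.symm.trans (h1.trans hm0)
        set i := f^[m0] j with hidef
        refine ⟨⟨i, Function.update f i i⟩, ?_, ?_⟩
        · rw [Finset.mem_sigma]
          constructor
          · rw [Finset.mem_filter]
            exact ⟨Finset.mem_univ i, hfi ▸ hfE i⟩
          · rw [hmemA]
            refine ⟨⟨Function.update_self i i f, ?_⟩, ?_⟩
            · intro k
              obtain ⟨m, hm⟩ := hfreach k
              have hreachi : ∃ m, f^[m] k = i :=
                ⟨m0 + m, by rw [Function.iterate_add_apply, hm]⟩
              exact reach_of_agree f (Function.update f i i) i
                (fun x hx => (Function.update_of_ne hx i f).symm) k hreachi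
            · intro v hv
              show (v, Function.update f i i v) ∈ E
              rw [Function.update_of_ne hv]
              exact hfE v
        · show Function.update (Function.update f i i) i j = f
          rw [Function.update_idem]
          calc Function.update f i j = Function.update f i (f i) := by rw [hfi]
            _ = f := Function.update_eq_self i f
    -- Step 2: F.card = d j * N j via f ↦ (f j, update f j j)
    have hA : F.card = ((Finset.univ.filter (fun k : S => (j, k) ∈ E)) ×ˢ
        (Finset.univ.filter
          (fun f : S → S => IsArb j f ∧ ∀ k ∈ Finset.univ.erase j, (k, f k) ∈ E))).card := by
      refine Finset.card_bij' (fun f _ => (f j, Function.update f j j))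
        (fun p _ => Function.update p.2 j p.1) ?_ ?_ ?_ ?_
      · intro f hfF
        obtain ⟨hfE, hfreach⟩ := (hmemF f).mp hfF
        rw [Finset.mem_product]
        constructor
        · rw [Finset.mem_filter]; exact ⟨Finset.mem_univ _, hfE j⟩
        · rw [hmemA]
          refine ⟨⟨Function.update_self j j f, ?_⟩, ?_⟩
          · intro k
            exact reach_of_agree f (Function.update f j j) j
              (fun x hx => (Function.update_of_ne hx j f).symm) k (hfreach k)
          · intro v hv
            show (v, Function.update f j j v) ∈ E
            rw [Function.update_of_ne hv]
            exact hfE v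
      · rintro ⟨k, a⟩ hp
        rw [Finset.mem_product, Finset.mem_filter] at hp
        obtain ⟨⟨-, hjk⟩, haA⟩ := hp
        obtain ⟨ha, haE⟩ := (hmemA j a).mp haA
        show Function.update a j k ∈ F
        rw [hmemF]
        constructor
        · intro v
          by_cases hv : v = j
          · subst hv; rw [Function.update_self]; exact hjk
          · rw [Function.update_of_ne hv]; exact haE v hv
        · intro v
          exact reach_of_agree a (Function.update a j k) j
            (fun x hx => (Function.update_of_ne hx k a).symm) v (ha.2 v)
      · intro f hfF
        show Function.update (Function.update f j j) j (f j) = f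
        rw [Function.update_idem]
        exact Function.update_eq_self j f
      · rintro ⟨k, a⟩ hp
        rw [Finset.mem_product, Finset.mem_filter] at hp
        obtain ⟨⟨-, -⟩, haA⟩ := hp
        obtain ⟨ha, -⟩ := (hmemA j a).mp haA
        show ((Function.update a j k) j, Function.update (Function.update a j k) j j) = (k, a)
        rw [Function.update_self, Function.update_idem]
        have : Function.update a j j = a := by
          calc Function.update a j j = Function.update a j (a j) := by rw [ha.1]
            _ = a := Function.update_eq_self j a
        rw [this]
    rw [hB, hA, Finset.card_product, ← hd, ← hN]
  -- Stationarity of the unnormalized measure μ i = d i * N i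
  have keyK : ∀ j : S, ∑ i, ((d i : ℝ) * N i) * P i j = (d j : ℝ) * N j := by
    intro j
    have hterm : ∀ i : S, ((d i : ℝ) * N i) * P i j
        = if (i, j) ∈ E then (N i : ℝ) else 0 := by
      intro i
      rw [hPdef]
      split
      · have hdi : (d i : ℝ) ≠ 0 := ne_of_gt (hdpos i)
        field_simp
      · ring
    calc ∑ i, ((d i : ℝ) * N i) * P i j
        = ∑ i, if (i, j) ∈ E then (N i : ℝ) else 0 :=
          Finset.sum_congr rfl fun i _ => hterm i
      _ = ∑ i ∈ Finset.univ.filter (fun i : S => (i, j) ∈ E), (N i : ℝ) :=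
          (Finset.sum_filter _ _).symm
      _ = ((∑ i ∈ Finset.univ.filter (fun i : S => (i, j) ∈ E), N i : ℕ) : ℝ) := by
          push_cast; ring
      _ = ((d j * N j : ℕ) : ℝ) := by rw [keyB j]
      _ = (d j : ℝ) * N j := by push_cast; ring
  -- positivity of N
  have hreach2 : ∀ v i : S, ∃ k, 0 < (P ^ k) v i := by
    intro v i
    obtain ⟨k, -, hk⟩ := hirr v i
    exact ⟨k, hk⟩
  have hNpos : ∀ i : S, 0 < N i := by
    intro i
    obtain ⟨f, hf1, hf2⟩ := exists_arb E P hPE hP0 hreach2 i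
    rw [hN]
    exact Finset.card_pos.mpr ⟨f, (hmemA i f).mpr ⟨hf1, hf2⟩⟩
  -- uniqueness argument
  set μ : S → ℝ := fun i => (d i : ℝ) * N i with hμ
  have hμpos : ∀ i, 0 < μ i := fun i =>
    mul_pos (hdpos i) (by exact_mod_cast hNpos i)
  have hZ : 0 < ∑ j, μ j := Finset.sum_pos (fun j _ => hμpos j) Finset.univ_nonempty
  obtain ⟨i0, -, hmin⟩ :=
    Finset.exists_min_image Finset.univ (fun i => π i / μ i) Finset.univ_nonempty
  set t := π i0 / μ i0 with ht
  set x : S → ℝ := fun i => π i - t * μ i with hx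
  have hx0 : ∀ i, 0 ≤ x i := by
    intro i
    have h1 : t ≤ π i / μ i := hmin i (Finset.mem_univ i)
    have h2 : t * μ i ≤ π i := (le_div_iff₀ (hμpos i)).mp h1
    simp only [hx]
    linarith
  have hxP : ∀ j, ∑ i, x i * P i j = x j := by
    intro j
    have hsplit : ∀ i, x i * P i j = π i * P i j - t * (μ i * P i j) := by
      intro i; simp only [hx]; ring
    calc ∑ i, x i * P i j
        = ∑ i, (π i * P i j - t * (μ i * P i j)) :=
          Finset.sum_congr rfl fun i _ => hsplit i
      _ = (∑ i, π i * P i j) - t * ∑ i, μ i * P i j := by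
          rw [Finset.sum_sub_distrib, ← Finset.mul_sum]
      _ = π j - t * μ j := by rw [hπ.2.2 j, keyK j]
  have hxi0 : x i0 = 0 := by
    simp only [hx, ht]
    rw [div_mul_cancel₀ _ (ne_of_gt (hμpos i0))]
    ring
  have hxall : ∀ v, x v = 0 := vanish_of_stationary P hP0 hirr x hx0 hxP i0 hxi0
  have hπeq : ∀ i, π i = t * μ i := by
    intro i
    have := hxall i
    simp only [hx] at this
    linarith
  have htZ : t * ∑ j, μ j = 1 := by
    rw [Finset.mul_sum, ← hπ.2.1]
    exact Finset.sum_congr rfl fun i _ => (hπeq i).symm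
  refine ⟨parta, fun i => ?_⟩
  rw [hπeq i, eq_div_iff (ne_of_gt hZ)]
  calc t * μ i * ∑ j, μ j = μ i * (t * ∑ j, μ j) := by ring
    _ = μ i := by rw [htZ, mul_one]
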